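/- Let S be a multiplicatively closed subset of a commutative Noetherian ring R, and let M be an S⁻¹R-module that is Gorenstein injective as an S⁻¹R-module. Then M is Gorenstein injective as an R-module. -/

import Mathlib

universe u

namespace GG

open RingTheory.Sequence

variable (R : Type u) [CommRing R]

/-- A module `N` is Gorenstein injective if it is a kernel in a `Hom(Inj,−)`-exact exact
doubly infinite complex of injective modules. -/
def IsGorensteinInjective (N : Type u) [AddCommGroup N] [Module R N] : Prop :=
  ∃ (X : ℤ → ModuleCat.{u} R) (d : ∀ n : ℤ, X n →ₗ[R] X (n + 1)),
    (∀ n, Module.Injective R (X n)) ∧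
    (∀ n, LinearMap.range (d n) = LinearMap.ker (d (n + 1))) ∧
    (∀ (I : ModuleCat.{u} R), Module.Injective R I →
      ∀ (n : ℤ) (φ : I →ₗ[R] X (n + 1)), (d (n + 1)).comp φ = 0 →
        ∃ ψ : I →ₗ[R] X n, (d n).comp ψ = φ) ∧
    Nonempty (N ≃ₗ[R] LinearMap.ker (d 0))

/-- A module `N` is Gorenstein projective if it is a kernel in a `Hom(−,Proj)`-exact exact
doubly infinite complex of projective modules. -/
def IsGorensteinProjective (N : Type u) [AddCommGroup N] [Module R N] : Prop :=
  ∃ (X : ℤ → ModuleCat.{u} R) (d : ∀ n : ℤ, X n →ₗ[R] X (n + 1)),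
    (∀ n, Module.Projective R (X n)) ∧
    (∀ n, LinearMap.range (d n) = LinearMap.ker (d (n + 1))) ∧
    (∀ (P : ModuleCat.{u} R), Module.Projective R P →
      ∀ (n : ℤ) (φ : X (n + 1) →ₗ[R] P), φ.comp (d n) = 0 →
        ∃ ψ : X (n + 1 + 1) →ₗ[R] P, ψ.comp (d (n + 1)) = φ) ∧
    Nonempty (N ≃ₗ[R] LinearMap.ker (d 0))

/-- A module `N` is Gorenstein flat if it is a kernel in an `(Inj ⊗ −)`-exact exact
doubly infinite complex of flat modules. -/
def IsGorensteinFlat (N : Type u) [AddCommGroup N] [Module R N] : Prop :=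
  ∃ (X : ℤ → ModuleCat.{u} R) (d : ∀ n : ℤ, X n →ₗ[R] X (n + 1)),
    (∀ n, Module.Flat R (X n)) ∧
    (∀ n, LinearMap.range (d n) = LinearMap.ker (d (n + 1))) ∧
    (∀ (I : ModuleCat.{u} R), Module.Injective R I →
      ∀ n : ℤ, LinearMap.range (LinearMap.lTensor (R := R) I (d n)) =
        LinearMap.ker (LinearMap.lTensor (R := R) I (d (n + 1)))) ∧
    Nonempty (N ≃ₗ[R] LinearMap.ker (d 0))

/-- Existence of a right resolution of length `≤ n` by modules satisfying `P`. -/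
def CoresolutionLE (P : ModuleCat.{u} R → Prop) (M : Type u) [AddCommGroup M] [Module R M]
    (n : ℕ) : Prop :=
  ∃ (G : ℕ → ModuleCat.{u} R) (d : ∀ i : ℕ, G i →ₗ[R] G (i + 1)) (ε : M →ₗ[R] G 0),
    (∀ i, P (G i)) ∧ Function.Injective ε ∧
    LinearMap.range ε = LinearMap.ker (d 0) ∧
    (∀ i, LinearMap.range (d i) = LinearMap.ker (d (i + 1))) ∧
    (∀ i, n < i → ∀ x : G i, x = 0)

/-- Existence of a left resolution of length `≤ n` by modules satisfying `P`. -/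
def ResolutionLE (P : ModuleCat.{u} R → Prop) (M : Type u) [AddCommGroup M] [Module R M]
    (n : ℕ) : Prop :=
  ∃ (G : ℕ → ModuleCat.{u} R) (d : ∀ i : ℕ, G (i + 1) →ₗ[R] G i) (ε : G 0 →ₗ[R] M),
    (∀ i, P (G i)) ∧ Function.Surjective ε ∧
    LinearMap.ker ε = LinearMap.range (d 0) ∧
    (∀ i, LinearMap.ker (d i) = LinearMap.range (d (i + 1))) ∧
    (∀ i, n < i → ∀ x : G i, x = 0)

/-- `Gid_R M ≤ n`. -/
def gidLE (M : Type u) [AddCommGroup M] [Module R M] (n : ℕ) : Prop :=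
  CoresolutionLE R (fun N => IsGorensteinInjective R N) M n

/-- `id_R M ≤ n`. -/
def idLE (M : Type u) [AddCommGroup M] [Module R M] (n : ℕ) : Prop :=
  CoresolutionLE R (fun N => Module.Injective R N) M n

/-- `pd_R M ≤ n`. -/
def pdLE (M : Type u) [AddCommGroup M] [Module R M] (n : ℕ) : Prop :=
  ResolutionLE R (fun N => Module.Projective R N) M n

/-- `fd_R M ≤ n`. -/
def fdLE (M : Type u) [AddCommGroup M] [Module R M] (n : ℕ) : Prop :=
  ResolutionLE R (fun N => Module.Flat R N) M n

/-- `Gfd_R M ≤ n`. -/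
def gfdLE (M : Type u) [AddCommGroup M] [Module R M] (n : ℕ) : Prop :=
  ResolutionLE R (fun N => IsGorensteinFlat R N) M n

/-- Gorenstein injective dimension, as an extended natural number. -/
noncomputable def gid (M : Type u) [AddCommGroup M] [Module R M] : ℕ∞ :=
  sInf {c : ℕ∞ | ∃ n : ℕ, c = n ∧ gidLE R M n}

/-- The depth of a module over a local ring: the supremum of the lengths of regular
sequences contained in the maximal ideal. -/
noncomputable def mdepth [IsLocalRing R] (M : Type u) [AddCommGroup M] [Module R M] : ℕ∞ :=
  sSup {c : ℕ∞ | ∃ rs : List R, c = rs.length ∧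
    (∀ r ∈ rs, r ∈ IsLocalRing.maximalIdeal R) ∧ RingTheory.Sequence.IsRegular M rs}

/-- The Krull dimension of a module: the Krull dimension of its support. -/
noncomputable def mdim (M : Type u) [AddCommGroup M] [Module R M] : WithBot ℕ∞ :=
  Order.krullDim ↥(Module.support R M)

/-- The height of a prime in the support of `M`. -/
noncomputable def htM (M : Type u) [AddCommGroup M] [Module R M] (p : PrimeSpectrum R) : ℕ∞ :=
  ⨆ h : p ∈ Module.support R M, Order.height (⟨p, h⟩ : ↥(Module.support R M))

/-- A Cohen–Macaulay module over a local ring: depth equals Krull dimension. -/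
def IsCMModule [IsLocalRing R] (M : Type u) [AddCommGroup M] [Module R M] : Prop :=
  (mdepth R M : WithBot ℕ∞) = mdim R M

/-- A maximal Cohen–Macaulay module over a local ring. -/
def IsMaximalCM [IsLocalRing R] (M : Type u) [AddCommGroup M] [Module R M] : Prop :=
  IsCMModule R M ∧ mdim R M = ringKrullDim R

/-- A Cohen–Macaulay local ring. -/
def IsCMLocalRing [IsLocalRing R] : Prop :=
  (mdepth R R : WithBot ℕ∞) = ringKrullDim R

/-- A Gorenstein local ring: a Noetherian local ring of finite self-injective dimension. -/
def IsGorensteinLocalRing [IsLocalRing R] : Prop :=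
  IsNoetherianRing R ∧ ∃ n : ℕ, idLE R R n

/-- A regular local ring: Noetherian, and the maximal ideal is generated by `dim R` elements. -/
def IsRegularLocal [IsLocalRing R] : Prop :=
  IsNoetherianRing R ∧ ∃ s : Finset R, Ideal.span (s : Set R) = IsLocalRing.maximalIdeal R ∧
    (s.card : WithBot ℕ∞) = ringKrullDim R

/-- A (not necessarily local) Gorenstein ring: all localizations at primes are Gorenstein. -/
def IsGorensteinRing : Prop :=
  ∀ p : PrimeSpectrum R, ∃ n : ℕ,
    idLE (Localization.AtPrime p.asIdeal) (Localization.AtPrime p.asIdeal) n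

/-- `R` admits a dualizing complex; by Kawasaki's theorem this is equivalent to being a
homomorphic image of a finite-dimensional Gorenstein ring. -/
def HasDualizingComplex : Prop :=
  ∃ Q : CommRingCat.{u}, IsNoetherianRing Q ∧ ringKrullDim Q < ⊤ ∧ IsGorensteinRing Q ∧
    ∃ f : Q →+* R, Function.Surjective f

section Cousin

/-- The product of the localizations of `N` at the primes in `S`. -/
noncomputable abbrev locProd (S : Set (PrimeSpectrum R)) (N : Type u) [AddCommGroup N]
    [Module R N] : Type u :=
  Π p : S, LocalizedModule p.1.asIdeal.primeCompl N

/-- The submodule of the product of localizations consisting of finitely supported families;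
this is the direct sum `⊕_{p ∈ S} N_p`. -/
noncomputable def finSupp (S : Set (PrimeSpectrum R)) (N : Type u) [AddCommGroup N]
    [Module R N] : Submodule R (locProd R S N) where
  carrier := {f | {p : S | f p ≠ 0}.Finite}
  add_mem' := by
    intro f g hf hg
    refine (hf.union hg).subset ?_
    intro p hp
    by_contra h
    simp only [Set.mem_union, Set.mem_setOf_eq, not_or, not_not] at h
    exact hp (by simp [Pi.add_apply, h.1, h.2])
  zero_mem' := by simp
  smul_mem' := by
    intro c f hf
    refine hf.subset ?_
    intro p hp
    by_contra h
    simp only [Set.mem_setOf_eq, not_not] at h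
    exact hp (by simp [Pi.smul_apply, h])

/-- The canonical map `N → ∏_{p ∈ S} N_p`. -/
noncomputable def thetaFull (S : Set (PrimeSpectrum R)) (N : Type u) [AddCommGroup N]
    [Module R N] : N →ₗ[R] locProd R S N :=
  LinearMap.pi fun p => LocalizedModule.mkLinearMap p.1.asIdeal.primeCompl N

/-- The cokernel of `N → ⊕_{p ∈ S} N_p` (computed inside the direct sum). -/
noncomputable abbrev nextKType (S : Set (PrimeSpectrum R)) (N : Type u) [AddCommGroup N]
    [Module R N] : Type u :=
  ↥(finSupp R S N) ⧸
    (Submodule.comap (finSupp R S N).subtype (LinearMap.range (thetaFull R S N)))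

/-- The sequence of "kernel/cokernel" modules in the inductive construction
of the Cousin complex of `M` with respect to the filtration `F`. -/
noncomputable def cousinK (F : ℕ → Set (PrimeSpectrum R)) (M : ModuleCat.{u} R) :
    ℕ → ModuleCat.{u} R
  | 0 => M
  | n + 1 => ModuleCat.of R (nextKType R (F n \ F (n + 1)) (cousinK F M n))

/-- The `n`-th term `M^n = ⊕_{p ∈ ∂F_n} (coker d^{n-2})_p` of the Cousin complex. -/
noncomputable abbrev cousinC (F : ℕ → Set (PrimeSpectrum R)) (M : ModuleCat.{u} R) (n : ℕ) :
    Type u :=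
  ↥(finSupp R (F n \ F (n + 1)) (cousinK R F M n))

/-- The canonical map from the `n`-th cokernel into the product of its localizations. -/
noncomputable def cousinTheta (F : ℕ → Set (PrimeSpectrum R)) (M : ModuleCat.{u} R) (n : ℕ) :
    (cousinK R F M n) →ₗ[R] locProd R (F n \ F (n + 1)) (cousinK R F M n) :=
  thetaFull R _ _

/-- The (full) `n`-th differential of the Cousin complex, from `M^n` to the product at
level `n+1` (it lands inside the direct sum `M^{n+1}`). -/
noncomputable def cousinD (F : ℕ → Set (PrimeSpectrum R)) (M : ModuleCat.{u} R) (n : ℕ) :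
    (cousinC R F M n) →ₗ[R] locProd R (F (n + 1) \ F (n + 2)) (cousinK R F M (n + 1)) :=
  (cousinTheta R F M (n + 1)).comp
    (Submodule.mkQ (Submodule.comap (finSupp R (F n \ F (n + 1)) (cousinK R F M n)).subtype
      (LinearMap.range (thetaFull R (F n \ F (n + 1)) (cousinK R F M n)))))

/-- `F` is a filtration of `Spec R`: descending, and every element of `∂F_n = F_n \ F_{n+1}`
is a minimal member of `F_n`. -/
def IsFiltration (F : ℕ → Set (PrimeSpectrum R)) : Prop :=
  (∀ n, F (n + 1) ⊆ F n) ∧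
    ∀ n, ∀ p ∈ F n \ F (n + 1), ∀ q ∈ F n, q ≤ p → q = p

/-- The filtration `F` admits `M`. -/
def Admits (F : ℕ → Set (PrimeSpectrum R)) (M : Type u) [AddCommGroup M] [Module R M] : Prop :=
  Module.support R M ⊆ F 0

/-- The `M`-height filtration `K_i = {p ∈ Supp M | ht_M p ≥ i}`. -/
noncomputable def heightFiltration (M : Type u) [AddCommGroup M] [Module R M] :
    ℕ → Set (PrimeSpectrum R) :=
  fun i => {p | p ∈ Module.support R M ∧ (i : ℕ∞) ≤ htM R M p}

/-- The Cousin complex `C(F, M)` is exact at `M, M⁰, …, M^t`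
(together with the well-definedness of the differentials into the direct sums). -/
def CousinPartiallyExact (F : ℕ → Set (PrimeSpectrum R)) (M : ModuleCat.{u} R) (t : ℕ) : Prop :=
  (∀ n, LinearMap.range (cousinTheta R F M n) ≤ finSupp R (F n \ F (n + 1)) (cousinK R F M n)) ∧
  Function.Injective (cousinTheta R F M 0) ∧
  (∀ n ≤ t, LinearMap.ker (cousinD R F M n) =
    Submodule.comap (finSupp R (F n \ F (n + 1)) (cousinK R F M n)).subtype
      (LinearMap.range (cousinTheta R F M n)))

/-- The Cousin complex `C(F, M)` is exact and all of its terms satisfy `P`, i.e. it provides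
a `P`-resolution of `M`. -/
def CousinResolves (F : ℕ → Set (PrimeSpectrum R)) (M : ModuleCat.{u} R)
    (P : ModuleCat.{u} R → Prop) : Prop :=
  (∀ n, LinearMap.range (cousinTheta R F M n) ≤ finSupp R (F n \ F (n + 1)) (cousinK R F M n)) ∧
  Function.Injective (cousinTheta R F M 0) ∧
  (∀ n, LinearMap.ker (cousinD R F M n) =
    Submodule.comap (finSupp R (F n \ F (n + 1)) (cousinK R F M n)).subtype
      (LinearMap.range (cousinTheta R F M n))) ∧
  (∀ n, P (ModuleCat.of R (cousinC R F M n)))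

/-- A G–Gorenstein module: a nonzero finitely generated module whose Cousin complex with
respect to the `M`-height filtration is a Gorenstein injective resolution. -/
def IsGGorenstein (M : ModuleCat.{u} R) : Prop :=
  (∃ x : M, x ≠ 0) ∧ Module.Finite R M ∧
    CousinResolves R (heightFiltration R M) M (fun N => IsGorensteinInjective R N)

/-- A Gorenstein module: a nonzero finitely generated module whose Cousin complex with
respect to the `M`-height filtration is an injective resolution. -/
def IsGorensteinModule (M : ModuleCat.{u} R) : Prop :=
  (∃ x : M, x ≠ 0) ∧ Module.Finite R M ∧
    CousinResolves R (heightFiltration R M) M (fun N => Module.Injective R N)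

end Cousin

/-- A system of parameters of a local ring. -/
def IsSOP [IsLocalRing R] (rs : List R) : Prop :=
  (rs.length : WithBot ℕ∞) = ringKrullDim R ∧
    (∀ r ∈ rs, r ∈ IsLocalRing.maximalIdeal R) ∧
    IsLocalRing.maximalIdeal R ≤ (Ideal.span {r | r ∈ rs}).radical

/-- A balanced big Cohen–Macaulay module: every system of parameters of `R` is a regular
sequence on `M`. -/
def IsBalancedBigCM [IsLocalRing R] (M : Type u) [AddCommGroup M] [Module R M] : Prop :=
  ∀ rs : List R, IsSOP R rs → RingTheory.Sequence.IsRegular M rs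

end GG


namespace GG
section StmtAux

variable {R : Type u} [CommRing R] (S : Submonoid R)

/-- Every `s ∈ S` acts invertibly on a `Localization S`-module. -/
lemma locUnits (N : Type u) [AddCommGroup N] [Module R N] [Module (Localization S) N]
    [IsScalarTower R (Localization S) N] (s : S) :
    IsUnit ((algebraMap R (Module.End R N)) s) :=
  (isLocalizedModule_id (S := S) (M := N) (Localization S)).map_units s

/-- An injective `Localization S`-module is injective over `R`. -/
lemma injective_restrict (E : Type u) [AddCommGroup E] [Module R E]
    [Module (Localization S) E] [IsScalarTower R (Localization S) E]
    (hE : Module.Injective (Localization S) E) : Module.Injective R E := by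
  constructor
  intro X Y _ _ _ _ f hf g
  let fX := LocalizedModule.mkLinearMap S X
  let fY := LocalizedModule.mkLinearMap S Y
  let Lf := IsLocalizedModule.map S fX fY f
  have hLf : Function.Injective Lf := IsLocalizedModule.map_injective S fX fY f hf
  let g' := IsLocalizedModule.lift S fX g (locUnits S E)
  obtain ⟨H, hH⟩ := hE.out (Lf.extendScalarsOfIsLocalization S (Localization S)) hLf
    (g'.extendScalarsOfIsLocalization S (Localization S))
  refine ⟨(H.restrictScalars R) ∘ₗ fY, fun x => ?_⟩
  have h1 : fY (f x) = Lf (fX x) := (IsLocalizedModule.map_apply S fX fY f x).symm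
  have h2 := hH (fX x)
  simp only [LinearMap.extendScalarsOfIsLocalization_apply'] at h2
  simp only [LinearMap.coe_comp, Function.comp_apply, LinearMap.coe_restrictScalars, h1, h2]
  exact IsLocalizedModule.lift_apply S fX g (locUnits S E) x

/-- Over a Noetherian ring, the localization of an injective module is injective over the
localized ring. -/
lemma injective_localized [IsNoetherianRing R] (E : Type u) [AddCommGroup E] [Module R E]
    (hE : Module.Injective R E) :
    Module.Injective (Localization S) (LocalizedModule S E) := by
  haveI := hE
  apply Module.Baer.injective
  intro J g
  let I : Ideal R := J.comap (algebraMap R (Localization S))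
  haveI : Module.Finite R I := Module.Finite.iff_fg.mpr (IsNoetherian.noetherian I)
  haveI : Module.FinitePresentation R I := Module.finitePresentation_of_finite R I
  let ι : I →ₗ[R] J :=
    { toFun := fun x => ⟨algebraMap R (Localization S) x.1, x.2⟩
      map_add' := fun x y => Subtype.ext (by simp [map_add])
      map_smul' := fun r x => Subtype.ext (by simp [Algebra.smul_def]) }
  let g₀ : I →ₗ[R] LocalizedModule S E := (g.restrictScalars R) ∘ₗ ι
  obtain ⟨h₀, s, hs⟩ := Module.FinitePresentation.exists_lift_of_isLocalizedModule S
    (LocalizedModule.mkLinearMap S E) g₀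
  obtain ⟨h₁, hh₁⟩ := Module.Injective.extension_property R E I R I.subtype
    (Submodule.injective_subtype I) h₀
  let k : Localization S →ₗ[R] LocalizedModule S E :=
    IsLocalizedModule.lift S (Algebra.linearMap R (Localization S))
      ((LocalizedModule.mkLinearMap S E) ∘ₗ h₁) (locUnits S _)
  have hk : ∀ (x : Localization S) (hx : x ∈ J), k x = s • g ⟨x, hx⟩ := by
    intro x hx
    obtain ⟨⟨r, t⟩, hrt⟩ := IsLocalization.surj (M := S) x
    have hrI : r ∈ I := by
      show algebraMap R (Localization S) r ∈ J
      rw [← hrt]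
      exact J.mul_mem_right _ hx
    apply (IsLocalizedModule.smul_inj (LocalizedModule.mkLinearMap S E) t _ _).mp
    have htx : (t : R) • x = algebraMap R (Localization S) r := by
      rw [Algebra.smul_def, mul_comm]; exact hrt
    calc t • k x = k ((t : R) • x) := (map_smul k (t : R) x).symm
      _ = k (Algebra.linearMap R (Localization S) r) := by rw [htx]; rfl
      _ = LocalizedModule.mkLinearMap S E (h₁ r) :=
          IsLocalizedModule.lift_apply S _ _ _ r
      _ = LocalizedModule.mkLinearMap S E (h₀ ⟨r, hrI⟩) := by
          rw [← LinearMap.congr_fun hh₁ ⟨r, hrI⟩]; rfl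
      _ = (s • g₀) ⟨r, hrI⟩ := LinearMap.congr_fun hs ⟨r, hrI⟩
      _ = s • g ⟨algebraMap R (Localization S) r, hrI⟩ := rfl
      _ = s • g ((algebraMap R (Localization S) t) • ⟨x, hx⟩) := by
          congr 2
          exact Subtype.ext (by simp only [SetLike.val_smul, smul_eq_mul, ← htx, Algebra.smul_def])
      _ = s • ((t : R) • g ⟨x, hx⟩) := by rw [map_smul g, algebraMap_smul]
      _ = t • (s • g ⟨x, hx⟩) := by rw [smul_comm]; rfl
  have u := locUnits S (LocalizedModule S E) s
  let g' : Localization S →ₗ[R] LocalizedModule S E := (u.unit⁻¹).val ∘ₗ k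
  refine ⟨g'.extendScalarsOfIsLocalization S (Localization S), fun x hx => ?_⟩
  show (u.unit⁻¹).val (k x) = g ⟨x, hx⟩
  rw [Module.End.algebraMap_isUnit_inv_apply_eq_iff]
  rw [hk x hx]
  rfl

end StmtAux
end GG

open GG in
/-- If `M` is a Gorenstein injective `S⁻¹R`-module, then `M` is Gorenstein injective as an
`R`-module. -/
theorem stmt0 (R : Type u) [CommRing R] [IsNoetherianRing R] (S : Submonoid R)
    (M : Type u) [AddCommGroup M] [Module (Localization S) M] [Module R M]
    [IsScalarTower R (Localization S) M]
    (h : IsGorensteinInjective (Localization S) M) :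
    IsGorensteinInjective R M := by
  classical
  obtain ⟨X, d, hinj, hex, hhom, ⟨e⟩⟩ := h
  letI : ∀ n : ℤ, Module R (X n) :=
    fun n => Module.compHom (X n) (algebraMap R (Localization S))
  haveI : ∀ n : ℤ, IsScalarTower R (Localization S) (X n) :=
    fun n => IsScalarTower.of_algebraMap_smul fun r x => rfl
  refine ⟨fun n => ModuleCat.of R (X n), fun n => (d n).restrictScalars R, ?_, ?_, ?_, ?_⟩
  · intro n
    exact injective_restrict S (X n) (hinj n)
  · intro n
    ext x
    have := SetLike.ext_iff.mp (hex n) x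
    simpa [LinearMap.mem_range, LinearMap.mem_ker] using this
  · intro I hI n φ hφ
    haveI := hI
    haveI hLI : Module.Injective (Localization S) (LocalizedModule S I) :=
      injective_localized S I hI
    let fI := LocalizedModule.mkLinearMap S I
    let φr : I →ₗ[R] X (n + 1) := φ
    let φ' : LocalizedModule S I →ₗ[R] X (n + 1) :=
      IsLocalizedModule.lift S fI φr (locUnits S _)
    let φ'' := φ'.extendScalarsOfIsLocalization S (Localization S)
    have hφ' : ((d (n + 1)).restrictScalars R) ∘ₗ φ' = 0 := by
      apply IsLocalizedModule.ext S fI (locUnits S _)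
      rw [LinearMap.comp_assoc, IsLocalizedModule.lift_comp S fI φr (locUnits S _)]
      rw [LinearMap.zero_comp]
      exact hφ
    have hφ'' : (d (n + 1)) ∘ₗ φ'' = 0 := by
      ext z
      exact LinearMap.congr_fun hφ' z
    obtain ⟨ψ'', hψ''⟩ := hhom (ModuleCat.of (Localization S) (LocalizedModule S I))
      hLI n φ'' hφ''
    let ψr : LocalizedModule S I →ₗ[Localization S] X n := ψ''
    refine ⟨(ψr.restrictScalars R) ∘ₗ fI, ?_⟩
    ext x
    have h2 : (d n) (ψr (fI x)) = φ'' (fI x) := LinearMap.congr_fun hψ'' (fI x)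
    show (d n) (ψr (fI x)) = φ x
    rw [h2]
    exact IsLocalizedModule.lift_apply S fI φr (locUnits S _) x
  · let q : ↥(LinearMap.ker (d 0)) ≃ₗ[R] ↥(LinearMap.ker ((d 0).restrictScalars R)) :=
      { toFun := fun x => ⟨x.1, x.2⟩
        invFun := fun x => ⟨x.1, x.2⟩
        map_add' := fun _ _ => rfl
        map_smul' := fun _ _ => rfl
        left_inv := fun _ => rfl
        right_inv := fun _ => rfl }
    exact ⟨(e.restrictScalars R).trans q⟩
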